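/- The tree produced by GetFlow on an STN G is indeed a tree: each execution node corresponding to an STN node has exactly one parent in the produced structure, even when the corresponding STN node has in-degree greater than one. -/
import Mathlib


/-- Behavior trees produced by GetFlow: a WaitAction leaf referencing an STN
node, or an execution node for an STN node with the list of its child
subtrees. -/
inductive BT (V : Type*) where
  | wait : V → BT V
  | exec : V → List (BT V) → BT V

/-- Whether a behavior tree's root is an execution node labelled `v`. -/
def isExec {V : Type*} [DecidableEq V] (v : V) : BT V → Bool
  | .wait _ => false
  | .exec w _ => decide (w = v)

/-- Number of execution nodes labelled `v` occurring in a behavior tree. -/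
def countExec {V : Type*} [DecidableEq V] (v : V) : BT V → ℕ
  | .wait _ => 0
  | .exec w ts => (if w = v then 1 else 0) +
      (ts.attach.map (fun t => countExec v t.1)).sum
decreasing_by
  cases t with
  | mk t ht => simpa using Nat.lt_add_left 1 (List.sizeOf_lt_of_mem ht)

/-- Number of positions in the tree at which an execution node labelled `v`
occurs as a direct child of some node, i.e. the number of parents that the
execution node(s) for `v` have in the produced structure. -/
def countParents {V : Type*} [DecidableEq V] (v : V) : BT V → ℕ
  | .wait _ => 0
  | .exec _ ts => ts.countP (isExec v) +
      (ts.attach.map (fun t => countParents v t.1)).sum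
decreasing_by
  cases t with
  | mk t ht => simpa using Nat.lt_add_left 1 (List.sizeOf_lt_of_mem ht)

mutual
  /-- GetFlow: DFS over the graph `children` from node `n`, carrying the set `U`
  of used nodes: on a used node it emits a WaitAction leaf (which references but
  does not contain the node's subtree); otherwise it materializes the node as a
  BT subtree and recurses on all children, threading the used set. (`fuel`
  bounds the recursion depth and is taken large enough to never run out.) -/
  def getFlow {V : Type*} [DecidableEq V] (children : V → List V)
      (fuel : ℕ) (n : V) (U : Finset V) : BT V × Finset V :=
    match fuel with
    | 0 => (BT.wait n, U)
    | Nat.succ f =>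
      if n ∈ U then (BT.wait n, U)
      else
        let r := getFlowList children f (children n) (insert n U)
        (BT.exec n r.1, r.2)
  termination_by (fuel, 0)

  /-- Process a list of children left to right, threading the used set. -/
  def getFlowList {V : Type*} [DecidableEq V] (children : V → List V)
      (fuel : ℕ) (l : List V) (U : Finset V) : List (BT V) × Finset V :=
    match l with
    | [] => ([], U)
    | y :: ys =>
      let r := getFlow children fuel y U
      let r' := getFlowList children fuel ys r.2
      (r.1 :: r'.1, r'.2)
  termination_by (fuel, l.length + 1)
end


section Aux
variable {V : Type*} [DecidableEq V]

lemma countExec_wait (v w : V) : countExec v (BT.wait w) = 0 := by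
  rw [countExec]

lemma countExec_exec (v w : V) (ts : List (BT V)) :
    countExec v (BT.exec w ts) = (if w = v then 1 else 0) + (ts.map (countExec v)).sum := by
  rw [countExec]; simp

lemma countParents_wait (v w : V) : countParents v (BT.wait w) = 0 := by
  rw [countParents]

lemma countParents_exec (v w : V) (ts : List (BT V)) :
    countParents v (BT.exec w ts) = ts.countP (isExec v) + (ts.map (countParents v)).sum := by
  rw [countParents]; simp

lemma list_key (v : V) (ts : List (BT V))
    (h : ∀ t ∈ ts, countParents v t + (if isExec v t then 1 else 0) = countExec v t) :
    ts.countP (isExec v) + (ts.map (countParents v)).sum = (ts.map (countExec v)).sum := by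
  induction ts with
  | nil => simp
  | cons t ts ih =>
    have ht := h t (by simp)
    have ih' := ih (fun t ht' => h t (by simp [ht']))
    simp only [List.countP_cons, List.map_cons, List.sum_cons]
    omega

lemma key (v : V) : ∀ t : BT V,
    countParents v t + (if isExec v t then 1 else 0) = countExec v t
  | .wait w => by simp [countParents_wait, countExec_wait, isExec]
  | .exec w ts => by
    have h : ∀ t ∈ ts, countParents v t + (if isExec v t then 1 else 0) = countExec v t :=
      fun t ht => key v t
    rw [countParents_exec, countExec_exec, isExec]
    have := list_key v ts h
    simp only [decide_eq_true_eq]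
    omega
decreasing_by
  simpa using Nat.lt_add_left 1 (List.sizeOf_lt_of_mem ht)

lemma listStep (v : V) (children : V → List V) (f : ℕ)
    (hflow : ∀ n U, countExec v (getFlow children f n U).1 + (if v ∈ U then 1 else 0)
        ≤ (if v ∈ (getFlow children f n U).2 then 1 else 0)) :
    ∀ l U, ((getFlowList children f l U).1.map (countExec v)).sum + (if v ∈ U then 1 else 0)
        ≤ (if v ∈ (getFlowList children f l U).2 then 1 else 0) := by
  intro l
  induction l with
  | nil => intro U; rw [getFlowList]; simp
  | cons y ys ih =>
    intro U
    rw [getFlowList]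
    simp only [List.map_cons, List.sum_cons]
    have h1 := hflow y U
    have h2 := ih (getFlow children f y U).2
    by_cases hU : v ∈ U <;> by_cases hM : v ∈ (getFlow children f y U).2 <;>
        by_cases hF : v ∈ (getFlowList children f ys (getFlow children f y U).2).2 <;>
        simp only [hU, hM, hF, if_true, if_false, ite_true, ite_false] at h1 h2 ⊢ <;> omega

lemma flowBound (v : V) (children : V → List V) :
    ∀ (f : ℕ) (n : V) (U : Finset V),
      countExec v (getFlow children f n U).1 + (if v ∈ U then 1 else 0)
        ≤ (if v ∈ (getFlow children f n U).2 then 1 else 0) := by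
  intro f
  induction f with
  | zero => intro n U; rw [getFlow]; simp [countExec_wait]
  | succ f ih =>
    intro n U
    rw [getFlow]
    by_cases hn : n ∈ U
    · simp [hn, countExec_wait]
    · rw [if_neg hn]
      have h := listStep v children f ih (children n) (insert n U)
      simp only []
      rw [countExec_exec]
      have hins : (if v ∈ insert n U then (1:ℕ) else 0)
          = (if n = v then 1 else 0) + (if v ∈ U then 1 else 0) := by
        by_cases hv : n = v
        · subst hv; simp [hn]
        · simp [Finset.mem_insert, hv, Ne.symm hv]
      rw [hins] at h
      by_cases hv : n = v <;> by_cases hU : v ∈ U <;>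
          by_cases hF : v ∈ (getFlowList children f (children n) (insert n U)).2 <;>
          simp only [hv, hU, hF, if_true, if_false, ite_true, ite_false] at h ⊢ <;> omega

end Aux

/-- The tree produced by GetFlow on an STN G is indeed a tree:
each execution node corresponding to an STN node has exactly one parent in the
produced structure — at most one parent for every node `v`, and exactly one
parent whenever the execution node for `v` occurs and `v` is not the root —
even when the corresponding STN node has in-degree greater than one. -/
theorem stmt16 {V : Type*} [Fintype V] [DecidableEq V]
    (children : V → List V) (n₀ : V) :
    ∀ v : V,
      countParents v (getFlow children (Fintype.card V + 1) n₀ ∅).1 ≤ 1 ∧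
      (v ≠ n₀ → countExec v (getFlow children (Fintype.card V + 1) n₀ ∅).1 = 1 →
        countParents v (getFlow children (Fintype.card V + 1) n₀ ∅).1 = 1) :=  by
  intro v
  have hkey := key v (getFlow children (Fintype.card V + 1) n₀ ∅).1
  have hb := flowBound v children (Fintype.card V + 1) n₀ ∅
  simp only [Finset.notMem_empty, if_neg, ite_false, add_zero] at hb
  have hce : countExec v (getFlow children (Fintype.card V + 1) n₀ ∅).1 ≤ 1 := by
    split at hb <;> omega
  constructor
  · omega
  · intro hne hone
    have hroot : isExec v (getFlow children (Fintype.card V + 1) n₀ ∅).1 = false := by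
      rw [getFlow]
      simp [isExec, Ne.symm hne]
    rw [hroot] at hkey
    simp at hkey
    omega
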